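/- Let A be a Banach space, 1 ≤ p < ∞, and a = (a_i) a sequence in A whose dual shadow {(φ(a_i))_i : φ ∈ A*_1} is bounded in ℓ^p. Set a_n = (a_1, …, a_n, 0, 0, …). Then the dual shadow of a is totally bounded in ℓ^p if and only if |||a_n − a|||_p → 0, where |||b|||_p = sup_{φ ∈ A*_1} ‖(φ(b_i))_i‖_p. -/

import Mathlib

open NormedSpace Filter Topology
open scoped ENNReal

/-- The dual shadow of a sequence `a` in `A`, viewed as a subset of `ℓ^p`. -/
def dualShadow {A : Type*} [NormedAddCommGroup A] [NormedSpace ℂ A] (p : ℝ≥0∞)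
    (a : ℕ → A) : Set (lp (fun _ : ℕ => ℂ) p) :=
  {x | ∃ φ : StrongDual ℂ A, ‖φ‖ ≤ 1 ∧ ∀ i, x i = φ (a i)}

section Aux

variable {p : ℝ≥0∞} [Fact (1 ≤ p)]

private lemma aux_pr_pos (hp' : p ≠ ⊤) : 0 < p.toReal :=
  ENNReal.toReal_pos (zero_lt_one.trans_le (Fact.out : (1:ℝ≥0∞) ≤ p)).ne' hp'

/-- pointwise domination gives norm comparison in `lp`. -/
private lemma aux_norm_le (hp' : p ≠ ⊤) {f g : lp (fun _ : ℕ => ℂ) p}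
    (h : ∀ i, ‖f i‖ ≤ ‖g i‖) : ‖f‖ ≤ ‖g‖ := by
  have hpr := aux_pr_pos hp'
  rw [← Real.rpow_le_rpow_iff (norm_nonneg _) (norm_nonneg _) hpr,
    lp.norm_rpow_eq_tsum hpr, lp.norm_rpow_eq_tsum hpr]
  exact Summable.tsum_le_tsum (fun i => Real.rpow_le_rpow (norm_nonneg _) (h i) hpr.le)
    ((lp.memℓp f).summable hpr) ((lp.memℓp g).summable hpr)

/-- The `n`-th tail of `f`, in `lp`. -/
private noncomputable def Tl (p : ℝ≥0∞) [Fact (1 ≤ p)] (n : ℕ)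
    (f : lp (fun _ : ℕ => ℂ) p) : lp (fun _ : ℕ => ℂ) p :=
  f - ∑ i ∈ Finset.range n, lp.single p i (f i)

private lemma Tl_apply (n : ℕ) (f : lp (fun _ : ℕ => ℂ) p) (j : ℕ) :
    Tl p n f j = if j < n then 0 else f j := by
  have h1 : (∑ i ∈ Finset.range n, lp.single p i (f i)) j
      = if j ∈ Finset.range n then f j else 0 := by
    calc (∑ i ∈ Finset.range n, lp.single p i (f i)) j
        = ∑ i ∈ Finset.range n, (lp.single (E := fun _ : ℕ => ℂ) p i (f i)) j := by
          rw [lp.coeFn_sum, Finset.sum_apply]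
      _ = ∑ i ∈ Finset.range n, if j = i then f j else 0 := by
          refine Finset.sum_congr rfl fun i _ => ?_
          by_cases hji : j = i
          · subst hji
            simp [lp.single_apply_self]
          · simp [lp.single_apply_ne p i _ hji, hji]
      _ = if j ∈ Finset.range n then f j else 0 :=
          Finset.sum_ite_eq (Finset.range n) j (fun _ => f j)
  have h2 : Tl p n f j = f j - (∑ i ∈ Finset.range n, lp.single p i (f i)) j := by
    rw [Tl, lp.coeFn_sub, Pi.sub_apply]
  rw [h2, h1]
  by_cases hj : j < n <;> simp [hj, Finset.mem_range]

private lemma Tl_norm_le (hp' : p ≠ ⊤) (n : ℕ) (f : lp (fun _ : ℕ => ℂ) p) :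
    ‖Tl p n f‖ ≤ ‖f‖ := by
  refine aux_norm_le hp' fun i => ?_
  rw [Tl_apply]
  split <;> simp

private lemma Tl_tendsto (hp' : p ≠ ⊤) (f : lp (fun _ : ℕ => ℂ) p) :
    Tendsto (fun n => ‖Tl p n f‖) atTop (𝓝 0) := by
  have hs := (lp.hasSum_single hp' f).tendsto_sum_nat
  have h : Tendsto (fun n => Tl p n f) atTop (𝓝 (f - f)) :=
    tendsto_const_nhds.sub hs
  rw [sub_self] at h
  simpa using h.norm

private lemma single_sub (i : ℕ) (c d : ℂ) :
    lp.single p i (c - d) = lp.single (E := fun _ : ℕ => ℂ) p i c - lp.single p i d := by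
  apply lp.ext
  funext j
  by_cases hj : j = i
  · subst hj
    simp [lp.single_apply_self, lp.coeFn_sub]
  · simp [lp.single_apply_ne p i _ hj, lp.coeFn_sub]

end Aux

/-- For `1 ≤ p < ∞` and a sequence `a` with bounded dual shadow, the dual shadow of `a`
is totally bounded in `ℓ^p` iff `|||aₙ − a|||_p → 0`, where `aₙ` is the `n`-th
truncation of `a` (so `aₙ − a` is the tail of `a`). -/
theorem totallyBounded_shadow_iff_truncations_converge {A : Type*}
    [NormedAddCommGroup A] [NormedSpace ℂ A] [CompleteSpace A]
    (p : ℝ≥0∞) [Fact (1 ≤ p)] (hp' : p ≠ ⊤) (a : ℕ → A)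
    (hmem : ∀ φ : StrongDual ℂ A, ‖φ‖ ≤ 1 → Memℓp (fun i => φ (a i)) p)
    (hbdd : BddAbove (norm '' dualShadow p a)) :
    TotallyBounded (dualShadow p a) ↔
      Tendsto (fun n : ℕ => sSup (norm '' dualShadow p (fun i => if i < n then 0 else a i)))
        atTop (𝓝 0) := by
  classical
  obtain ⟨M, hM⟩ := hbdd
  set S := dualShadow p a with hS
  set Sn : ℕ → Set (lp (fun _ : ℕ => ℂ) p) :=
    fun n => dualShadow p (fun i => if i < n then 0 else a i) with hSnDef
  have hzero : ∀ b : ℕ → A, (0 : lp (fun _ : ℕ => ℂ) p) ∈ dualShadow p b := by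
    intro b
    exact ⟨0, by simp, fun i => by simp [lp.coeFn_zero]⟩
  have hyS : ∀ (φ : StrongDual ℂ A) (hφ : ‖φ‖ ≤ 1),
      (⟨fun i => φ (a i), hmem φ hφ⟩ : lp (fun _ : ℕ => ℂ) p) ∈ S :=
    fun φ hφ => ⟨φ, hφ, fun _ => rfl⟩
  have hM0 : 0 ≤ M := by
    have := hM ⟨(0 : lp (fun _ : ℕ => ℂ) p), hzero a, rfl⟩
    simpa using this
  have hSn_mem : ∀ n (x : lp (fun _ : ℕ => ℂ) p), x ∈ Sn n ↔
      ∃ φ : StrongDual ℂ A, ‖φ‖ ≤ 1 ∧ ∀ i, x i = if i < n then 0 else φ (a i) := by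
    intro n x
    constructor
    · rintro ⟨φ, hφ, hx⟩
      exact ⟨φ, hφ, fun i => by rw [hx i, apply_ite φ, map_zero]⟩
    · rintro ⟨φ, hφ, hx⟩
      exact ⟨φ, hφ, fun i => by rw [hx i, apply_ite φ, map_zero]⟩
  have htail : ∀ n x, x ∈ Sn n → ∃ y ∈ S, x = Tl p n y := by
    intro n x hx
    rw [hSn_mem] at hx
    obtain ⟨φ, hφ, hx⟩ := hx
    refine ⟨⟨fun i => φ (a i), hmem φ hφ⟩, hyS φ hφ, ?_⟩
    apply lp.ext
    funext j
    rw [hx j, Tl_apply]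
  have hSnbdd : ∀ n, ∀ x ∈ Sn n, ‖x‖ ≤ M := by
    intro n x hx
    obtain ⟨y, hyS', rfl⟩ := htail n x hx
    exact (Tl_norm_le hp' n y).trans (hM ⟨y, hyS', rfl⟩)
  have hSnBdd : ∀ n, BddAbove (norm '' Sn n) := by
    intro n
    exact ⟨M, by rintro r ⟨x, hx, rfl⟩; exact hSnbdd n x hx⟩
  have hSn_nonneg : ∀ n, 0 ≤ sSup (norm '' Sn n) := by
    intro n
    refine le_csSup (hSnBdd n) ?_
    exact ⟨0, hzero _, by simp⟩
  constructor
  · -- totally bounded → tails tend to 0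
    intro htb
    rw [NormedAddCommGroup.tendsto_nhds_zero]
    intro ε hε
    obtain ⟨t, htfin, hcov⟩ := Metric.totallyBounded_iff.mp htb (ε/3) (by linarith)
    have hev : ∀ᶠ n in atTop, ∀ c ∈ t, ‖Tl p n c‖ < ε/3 := by
      rw [eventually_all_finite htfin]
      intro c _
      exact (Tl_tendsto hp' c).eventually (gt_mem_nhds (by linarith))
    filter_upwards [hev] with n hn
    rw [Real.norm_of_nonneg (hSn_nonneg n)]
    have hle : sSup (norm '' Sn n) ≤ 2*ε/3 := by
      refine csSup_le ⟨‖(0 : lp (fun _ : ℕ => ℂ) p)‖,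
        Set.mem_image_of_mem _ (hzero _)⟩ ?_
      rintro r ⟨x, hx, rfl⟩
      obtain ⟨y, hyS', rfl⟩ := htail n x hx
      obtain ⟨c, hct, hyc⟩ := Set.mem_iUnion₂.mp (hcov hyS')
      have h1 : ‖Tl p n y - Tl p n c‖ ≤ ‖y - c‖ := by
        refine aux_norm_le hp' fun i => ?_
        have : (Tl p n y - Tl p n c) i = Tl p n y i - Tl p n c i := by
          rw [lp.coeFn_sub, Pi.sub_apply]
        rw [this, Tl_apply, Tl_apply]
        have : (y - c) i = y i - c i := by rw [lp.coeFn_sub, Pi.sub_apply]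
        rw [this]
        by_cases hi : i < n <;> simp [hi]
      have h2 : ‖y - c‖ < ε/3 := by
        rw [Metric.mem_ball, dist_eq_norm] at hyc
        exact hyc
      have h3 : ‖Tl p n y‖ ≤ ‖Tl p n y - Tl p n c‖ + ‖Tl p n c‖ := by
        have := norm_add_le (Tl p n y - Tl p n c) (Tl p n c)
        simpa using this
      calc ‖Tl p n y‖ ≤ ‖Tl p n y - Tl p n c‖ + ‖Tl p n c‖ := h3
        _ ≤ ‖y - c‖ + ‖Tl p n c‖ := add_le_add_left h1 _
        _ ≤ ε/3 + ε/3 := add_le_add h2.le (hn c hct).le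
        _ = 2*ε/3 := by ring
    linarith
  · -- tails tend to 0 → totally bounded
    intro h
    rw [Metric.totallyBounded_iff]
    intro ε hε
    obtain ⟨n, hn⟩ := (h.eventually (gt_mem_nhds (show (0:ℝ) < ε/4 by linarith))).exists
    have htls : ∀ x ∈ Sn n, ‖x‖ < ε/4 := fun x hx =>
      lt_of_le_of_lt (le_csSup (hSnBdd n) ⟨x, hx, rfl⟩) hn
    set F : (Fin n → ℂ) → lp (fun _ : ℕ => ℂ) p :=
      fun v => ∑ i : Fin n, lp.single p (i : ℕ) (v i) with hF
    have hFcont : Continuous F := by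
      refine continuous_finset_sum _ fun i _ => ?_
      have hiso : Isometry (fun c : ℂ => lp.single (E := fun _ : ℕ => ℂ) p (i : ℕ) c) := by
        refine Isometry.of_dist_eq fun c d => ?_
        rw [dist_eq_norm, dist_eq_norm, ← single_sub]
        exact lp.norm_single (E := fun _ : ℕ => ℂ) (zero_lt_one.trans_le (Fact.out : (1:ℝ≥0∞) ≤ p)) (i : ℕ) (c - d)
      exact hiso.continuous.comp (continuous_apply i)
    have hK : IsCompact (F '' Metric.closedBall (0 : Fin n → ℂ) M) :=
      (isCompact_closedBall _ _).image hFcont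
    obtain ⟨t, htfin, hcov⟩ := Metric.totallyBounded_iff.mp hK.totallyBounded (ε/2) (by linarith)
    refine ⟨t, htfin, fun x hxS => ?_⟩
    obtain ⟨φ, hφ, hxφ⟩ := hxS
    have hxS' : x ∈ S := ⟨φ, hφ, hxφ⟩
    set v : Fin n → ℂ := fun i => x i with hv
    have hvK : v ∈ Metric.closedBall (0 : Fin n → ℂ) M := by
      rw [Metric.mem_closedBall, dist_zero_right]
      refine (pi_norm_le_iff_of_nonneg hM0).mpr fun i => ?_
      exact (lp.norm_apply_le_norm
        (zero_lt_one.trans_le (Fact.out : (1:ℝ≥0∞) ≤ p)).ne' x (i : ℕ)).trans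
        (hM ⟨x, hxS', rfl⟩)
    have hFv : ∀ j, F v j = if hj : j < n then v ⟨j, hj⟩ else 0 := by
      intro j
      have hsum : F v j = ∑ i : Fin n, lp.single (E := fun _ : ℕ => ℂ) p (i : ℕ) (v i) j := by
        rw [hF, lp.coeFn_sum, Finset.sum_apply]
      rw [hsum]
      by_cases hj : j < n
      · rw [dif_pos hj]
        have hss := Finset.sum_eq_single_of_mem (s := (Finset.univ : Finset (Fin n)))
          (f := fun i : Fin n => lp.single (E := fun _ : ℕ => ℂ) p (i : ℕ) (v i) j)
          (⟨j, hj⟩ : Fin n) (Finset.mem_univ _)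
          (fun i _ hi => lp.single_apply_ne (E := fun _ : ℕ => ℂ) p (i : ℕ) (v i)
            (fun hji => hi (Fin.ext hji.symm)))
        rw [hss]
        exact lp.single_apply_self (E := fun _ : ℕ => ℂ) p (j : ℕ) (v ⟨j, hj⟩)
      · rw [dif_neg hj]
        refine Finset.sum_eq_zero fun i _ => ?_
        refine lp.single_apply_ne p (i : ℕ) _ ?_
        intro hji
        exact hj (hji ▸ i.isLt)
    have hxF : x - F v ∈ Sn n := by
      rw [hSn_mem]
      refine ⟨φ, hφ, fun i => ?_⟩
      have hsub : (x - F v) i = x i - F v i := by rw [lp.coeFn_sub, Pi.sub_apply]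
      rw [hsub, hFv i, hxφ i]
      by_cases hi : i < n
      · simp [hi, hv, hxφ i]
      · simp [hi]
    have hxtail : ‖x - F v‖ < ε/4 := htls _ hxF
    obtain ⟨c, hct, hFc⟩ := Set.mem_iUnion₂.mp (hcov ⟨v, hvK, rfl⟩)
    refine Set.mem_iUnion₂.mpr ⟨c, hct, ?_⟩
    rw [Metric.mem_ball]
    calc dist x c ≤ dist x (F v) + dist (F v) c := dist_triangle _ _ _
      _ < ε/4 + ε/2 := add_lt_add (by rw [dist_eq_norm]; exact hxtail) (Metric.mem_ball.mp hFc)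
      _ < ε := by linarith
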